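/- If P is a collected n-regular n-compressed (0,1)-matrix with m rows and w columns, m > n, and one deletes the first n rows and the first ε(n+1,P)−1 columns, the resulting matrix P' with m−n rows and w−(ε(n+1,P)−1) columns is again a collected n-regular n-compressed matrix. -/

import Mathlib

/-- Entries of the (0,1)-matrix (represented by its set of ones, as a Boolean
function on 1-based indices) lie within the index range `[1,m] × [1,w]`. -/
def Matrix01 (P : ℕ → ℕ → Bool) (m w : ℕ) : Prop :=
  ∀ i j, P i j = true → 1 ≤ i ∧ i ≤ m ∧ 1 ≤ j ∧ j ≤ w

/-- `eps P i` = the index of the first one in row `i` (the quantity `ε(i,P)`). -/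
noncomputable def eps (P : ℕ → ℕ → Bool) (i : ℕ) : ℕ :=
  sInf {j | P i j = true}

/-- Every row in range is collected: its ones form a nonempty set of
consecutive indices. -/
def RowsCollected (P : ℕ → ℕ → Bool) (m : ℕ) : Prop :=
  ∀ i, 1 ≤ i → i ≤ m →
    (∃ j, P i j = true) ∧
    ∀ p q r, P i p = true → P i q = true → p ≤ r → r ≤ q → P i r = true

/-- Every column in range is collected. -/
def ColsCollected (P : ℕ → ℕ → Bool) (w : ℕ) : Prop :=
  ∀ j, 1 ≤ j → j ≤ w →
    (∃ i, P i j = true) ∧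
    ∀ p q r, P p j = true → P q j = true → p ≤ r → r ≤ q → P r j = true

/-- `P` is a collected matrix with `m` rows and `w` columns. -/
def CollectedMatrix (P : ℕ → ℕ → Bool) (m w : ℕ) : Prop :=
  Matrix01 P m w ∧ RowsCollected P m ∧ ColsCollected P w ∧
  P 1 1 = true ∧ P m w = true ∧
  ∀ i i', 1 ≤ i → i ≤ i' → i' ≤ m → eps P i ≤ eps P i'

/-- `P` is `n`-regular: every row has exactly `n` ones. -/
def RowRegular (P : ℕ → ℕ → Bool) (m w n : ℕ) : Prop :=
  ∀ i, 1 ≤ i → i ≤ m → ((Finset.Icc 1 w).filter (fun j => P i j = true)).card = n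

/-- `P` is `c`-compressed: every column has at most `c` ones. -/
def ColCompressed (P : ℕ → ℕ → Bool) (m w c : ℕ) : Prop :=
  ∀ j, 1 ≤ j → j ≤ w → ((Finset.Icc 1 m).filter (fun i => P i j = true)).card ≤ c

/-- Deleting the first `n` rows and the first `ε(n+1,P) - 1`
columns of a collected `n`-regular `n`-compressed matrix `P` (with `m > n`
rows) yields again a collected `n`-regular `n`-compressed matrix, with
`m - n` rows and `w - (ε(n+1,P) - 1)` columns. -/
lemma eps_mem_aux (P : ℕ → ℕ → Bool) (m : ℕ) (hrc : RowsCollected P m)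
    (i : ℕ) (h1 : 1 ≤ i) (h2 : i ≤ m) : P i (eps P i) = true :=
  Nat.sInf_mem (hrc i h1 h2).1

lemma row_char (P : ℕ → ℕ → Bool) (m w n : ℕ) (hM : Matrix01 P m w)
    (hrc : RowsCollected P m) (hreg : RowRegular P m w n)
    (i : ℕ) (h1 : 1 ≤ i) (h2 : i ≤ m) (c : ℕ) :
    P i c = true ↔ eps P i ≤ c ∧ c < eps P i + n := by
  have hε : P i (eps P i) = true := eps_mem_aux P m hrc i h1 h2
  have hεIcc : eps P i ∈ Finset.Icc 1 w := by
    have := hM i _ hε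
    exact Finset.mem_Icc.mpr ⟨this.2.2.1, this.2.2.2⟩
  have hSne : ((Finset.Icc 1 w).filter (fun j => P i j = true)).Nonempty :=
    ⟨eps P i, Finset.mem_filter.mpr ⟨hεIcc, hε⟩⟩
  constructor
  · intro h
    have hle : eps P i ≤ c := Nat.sInf_le h
    refine ⟨hle, ?_⟩
    by_contra hc
    push_neg at hc
    have hsub : Finset.Icc (eps P i) c ⊆ (Finset.Icc 1 w).filter (fun j => P i j = true) := by
      intro r hr
      rw [Finset.mem_Icc] at hr
      have hPr : P i r = true := (hrc i h1 h2).2 (eps P i) c r hε h hr.1 hr.2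
      have := hM i r hPr
      exact Finset.mem_filter.mpr ⟨Finset.mem_Icc.mpr ⟨this.2.2.1, this.2.2.2⟩, hPr⟩
    have hcard := Finset.card_le_card hsub
    rw [hreg i h1 h2, Nat.card_Icc] at hcard
    omega
  · rintro ⟨hεc, hcn⟩
    set S := (Finset.Icc 1 w).filter (fun j => P i j = true) with hSdef
    have hMmem := S.max'_mem hSne
    have hPM : P i (S.max' hSne) = true := (Finset.mem_filter.mp hMmem).2
    have hεM : eps P i ≤ S.max' hSne := Nat.sInf_le hPM
    have hSeq : S = Finset.Icc (eps P i) (S.max' hSne) := by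
      apply Finset.Subset.antisymm
      · intro x hx
        have hPx := (Finset.mem_filter.mp hx).2
        exact Finset.mem_Icc.mpr ⟨Nat.sInf_le hPx, Finset.le_max' S x hx⟩
      · intro x hx
        rw [Finset.mem_Icc] at hx
        have hPx : P i x = true := (hrc i h1 h2).2 (eps P i) _ x hε hPM hx.1 hx.2
        have := hM i x hPx
        exact Finset.mem_filter.mpr ⟨Finset.mem_Icc.mpr ⟨this.2.2.1, this.2.2.2⟩, hPx⟩
    have hcard : S.card = n := hreg i h1 h2
    rw [hSeq, Nat.card_Icc] at hcard
    have hcle : c ≤ S.max' hSne := by omega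
    have hcS : c ∈ S := by
      rw [hSeq]; exact Finset.mem_Icc.mpr ⟨hεc, hcle⟩
    exact (Finset.mem_filter.mp hcS).2

lemma coverage (P : ℕ → ℕ → Bool) (m w n : ℕ) (hM : Matrix01 P m w)
    (hrc : RowsCollected P m) (hcc : ColsCollected P w)
    (hmon : ∀ i i', 1 ≤ i → i ≤ i' → i' ≤ m → eps P i ≤ eps P i')
    (hreg : RowRegular P m w n) (hmn : n < m)
    (c : ℕ) (hc1 : eps P (n + 1) ≤ c) (hc2 : c ≤ w) :
    ∃ i, n + 1 ≤ i ∧ i ≤ m ∧ eps P i ≤ c ∧ c < eps P i + n := by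
  have he1 : 1 ≤ eps P (n + 1) := by
    have := hM _ _ (eps_mem_aux P m hrc (n + 1) (by omega) (by omega))
    exact this.2.2.1
  set T := (Finset.Icc (n + 1) m).filter (fun i => eps P i ≤ c) with hTdef
  have hTne : T.Nonempty :=
    ⟨n + 1, Finset.mem_filter.mpr ⟨Finset.mem_Icc.mpr ⟨le_refl _, by omega⟩, hc1⟩⟩
  set i := T.max' hTne with hidef
  have hiT := T.max'_mem hTne
  rw [Finset.mem_filter, Finset.mem_Icc] at hiT
  obtain ⟨⟨hi1, hi2⟩, hic⟩ := hiT
  by_cases hlt : c < eps P i + n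
  · exact ⟨i, hi1, hi2, hic, hlt⟩
  · exfalso
    push_neg at hlt
    obtain ⟨k, hk⟩ := (hcc c (by omega) hc2).1
    have hkb := hM k c hk
    have hkchar := (row_char P m w n hM hrc hreg k hkb.1 hkb.2.1 c).mp hk
    have hik : i < k := by
      by_contra hle
      push_neg at hle
      have := hmon k i hkb.1 hle hi2
      omega
    have hkT : k ∈ T :=
      Finset.mem_filter.mpr ⟨Finset.mem_Icc.mpr ⟨by omega, hkb.2.1⟩, hkchar.1⟩
    have := Finset.le_max' T k hkT
    omega

theorem stmt2 (P : ℕ → ℕ → Bool) (m w n : ℕ)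
    (hn : 0 < n) (hw : 0 < w) (hmn : n < m)
    (hcol : CollectedMatrix P m w)
    (hreg : RowRegular P m w n)
    (hcomp : ColCompressed P m w n)
    (P' : ℕ → ℕ → Bool)
    (hP' : ∀ i j, P' i j =
      if 1 ≤ i ∧ 1 ≤ j then P (i + n) (j + (eps P (n + 1) - 1)) else false) :
    CollectedMatrix P' (m - n) (w - (eps P (n + 1) - 1)) ∧
    RowRegular P' (m - n) (w - (eps P (n + 1) - 1)) n ∧
    ColCompressed P' (m - n) (w - (eps P (n + 1) - 1)) n := by
  obtain ⟨hM, hrc, hcc, h11, hmw, hmon⟩ := hcol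
  set e := eps P (n + 1) with hedef
  set E := e - 1 with hEdef
  have hPe : P (n + 1) e = true := eps_mem_aux P m hrc (n + 1) (by omega) (by omega)
  have he1 : 1 ≤ e := (hM _ _ hPe).2.2.1
  have hew : e ≤ w := (hM _ _ hPe).2.2.2
  have henw : e + n - 1 ≤ w := by
    have hPen : P (n + 1) (e + n - 1) = true :=
      (row_char P m w n hM hrc hreg (n + 1) (by omega) (by omega) (e + n - 1)).mpr
        (by omega)
    exact (hM _ _ hPen).2.2.2
  have hP'c : ∀ i j, P' i j = true ↔ 1 ≤ i ∧ 1 ≤ j ∧ P (i + n) (j + E) = true := by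
    intro i j
    rw [hP' i j]
    constructor
    · intro ht
      split at ht
      · rename_i hcond
        exact ⟨hcond.1, hcond.2, ht⟩
      · simp at ht
    · rintro ⟨h1, h2, h3⟩
      rw [if_pos ⟨h1, h2⟩]
      exact h3
  have hεge : ∀ i, 1 ≤ i → i ≤ m - n → e ≤ eps P (i + n) :=
    fun i hi1 hi2 => hmon (n + 1) (i + n) (by omega) (by omega) (by omega)
  have hεnw : ∀ i, 1 ≤ i → i ≤ m - n → eps P (i + n) + n - 1 ≤ w := by
    intro i hi1 hi2
    have hP1 : P (i + n) (eps P (i + n) + n - 1) = true :=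
      (row_char P m w n hM hrc hreg (i + n) (by omega) (by omega) _).mpr (by omega)
    exact (hM _ _ hP1).2.2.2
  have hrowP' : ∀ i, 1 ≤ i → i ≤ m - n → ∀ j,
      (P' i j = true ↔ eps P (i + n) - E ≤ j ∧ j < eps P (i + n) - E + n) := by
    intro i hi1 hi2 j
    have h1 := hεge i hi1 hi2
    rw [hP'c, row_char P m w n hM hrc hreg (i + n) (by omega) (by omega) (j + E)]
    omega
  have hepsP' : ∀ i, 1 ≤ i → i ≤ m - n → eps P' i = eps P (i + n) - E := by
    intro i hi1 hi2
    have h1 := hεge i hi1 hi2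
    have hmemb : P' i (eps P (i + n) - E) = true := by
      rw [hrowP' i hi1 hi2]; omega
    apply le_antisymm
    · exact Nat.sInf_le hmemb
    · have hne : {j | P' i j = true}.Nonempty := ⟨_, hmemb⟩
      have hmem2 : P' i (eps P' i) = true := Nat.sInf_mem hne
      rw [hrowP' i hi1 hi2] at hmem2
      exact hmem2.1
  refine ⟨⟨?_, ?_, ?_, ?_, ?_, ?_⟩, ?_, ?_⟩
  · -- Matrix01
    intro i j h
    rw [hP'c] at h
    obtain ⟨h1, h2, h3⟩ := h
    have := hM _ _ h3
    omega
  · -- RowsCollected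
    intro i hi1 hi2
    have h1 := hεge i hi1 hi2
    constructor
    · exact ⟨eps P (i + n) - E, by rw [hrowP' i hi1 hi2]; omega⟩
    · intro p q r hp hq hpr hrq
      rw [hrowP' i hi1 hi2] at hp hq ⊢
      omega
  · -- ColsCollected
    intro j hj1 hj2
    constructor
    · have hce : e ≤ j + E := by omega
      have hcw : j + E ≤ w := by omega
      obtain ⟨i, hi1, hi2, hil, hiu⟩ :=
        coverage P m w n hM hrc hcc hmon hreg hmn (j + E) hce hcw
      refine ⟨i - n, ?_⟩
      rw [hP'c]
      refine ⟨by omega, hj1, ?_⟩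
      have hin : i - n + n = i := by omega
      rw [hin]
      exact (row_char P m w n hM hrc hreg i (by omega) hi2 (j + E)).mpr ⟨hil, hiu⟩
    · intro p q r hp hq hpr hrq
      rw [hP'c] at hp hq ⊢
      refine ⟨by omega, hp.2.1, ?_⟩
      have hjw := hM _ _ hp.2.2
      exact (hcc (j + E) hjw.2.2.1 hjw.2.2.2).2 (p + n) (q + n) (r + n)
        hp.2.2 hq.2.2 (by omega) (by omega)
  · -- P' 1 1
    rw [hP'c]
    refine ⟨le_refl _, le_refl _, ?_⟩
    have h1n : 1 + n = n + 1 := by omega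
    have h1E : 1 + E = e := by omega
    rw [h1n, h1E]
    exact hPe
  · -- P' (m-n) (w-E)
    rw [hP'c]
    refine ⟨by omega, by omega, ?_⟩
    have h1 : m - n + n = m := by omega
    have h2 : w - E + E = w := by omega
    rw [h1, h2]
    exact hmw
  · -- eps monotone
    intro i i' hi1 hii' hi'm
    rw [hepsP' i hi1 (by omega), hepsP' i' (by omega) hi'm]
    exact Nat.sub_le_sub_right (hmon (i + n) (i' + n) (by omega) (by omega) (by omega)) E
  · -- RowRegular
    intro i hi1 hi2
    have h1 := hεge i hi1 hi2
    have h2 := hεnw i hi1 hi2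
    have key : (Finset.Icc 1 (w - E)).filter (fun j => P' i j = true)
        = Finset.Icc (eps P (i + n) - E) (eps P (i + n) - E + n - 1) := by
      ext j
      simp only [Finset.mem_filter, Finset.mem_Icc]
      rw [hrowP' i hi1 hi2]
      omega
    rw [key, Nat.card_Icc]
    omega
  · -- ColCompressed
    intro j hj1 hj2
    have hjEw : j + E ≤ w := by omega
    refine le_trans ?_ (hcomp (j + E) (by omega) hjEw)
    apply Finset.card_le_card_of_injOn (fun i => i + n)
    · intro x hx
      simp only [Finset.mem_coe, Finset.mem_filter, Finset.mem_Icc] at hx ⊢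
      rw [hP'c] at hx
      exact ⟨⟨by omega, by omega⟩, hx.2.2.2⟩
    · intro a _ b _ h
      simpa using h
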